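/- Let ⊢ denote derivability in the calculus obtained from GB by adding Identity and Limited Cut. Then every instance of Cut is derivable: for all finite multisets of formulas Γ, Γ', Δ, Δ' and every formula φ, {Γ▷Δ,φ ; φ,Γ'▷Δ'} ⊢ Γ,Γ' ▷ Δ,Δ'. -/

import Mathlib

/-- Propositional formulas: atoms, conjunction, disjunction, De Morgan negation, ⊤, ⊥. -/
inductive Fm : Type where
  | atom : ℕ → Fm
  | conj : Fm → Fm → Fm
  | disj : Fm → Fm → Fm
  | neg  : Fm → Fm
  | top  : Fm
  | bot  : Fm
deriving DecidableEq

/-- A sequent is a pair of finite multisets of formulas. -/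
abbrev Sqnt : Type := Multiset Fm × Multiset Fm

/-- A formula is an atom. -/
def isAtom (φ : Fm) : Prop := ∃ i, φ = Fm.atom i

/-- A sequent is atomic if every formula in it is an atom. -/
def AtomicSeq (s : Sqnt) : Prop := (∀ φ ∈ s.1, isAtom φ) ∧ (∀ φ ∈ s.2, isAtom φ)

/-- Derivability of a sequent from a set `S` of sequents in a super-Belnap calculus.
The calculus always contains the common structural rules of Weakening and Contraction.
The `Prop` flags switch further rules on and off:
`i` = the introduction rules (incl. the axioms `∅▷⊤` and `⊥▷∅`),
`e` = the elimination rules, `d` = Identity, `c` = Cut, `l` = Limited Cut. -/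
inductive Drv (i e d c l : Prop) (S : Set Sqnt) : Sqnt → Prop where
  | prem {s} : s ∈ S → Drv i e d c l S s
  -- common structural rules: Weakening and Contraction
  | wkL (φ : Fm) {Γ Δ} : Drv i e d c l S (Γ, Δ) → Drv i e d c l S (φ ::ₘ Γ, Δ)
  | wkR (φ : Fm) {Γ Δ} : Drv i e d c l S (Γ, Δ) → Drv i e d c l S (Γ, φ ::ₘ Δ)
  | ctrL {φ Γ Δ} : Drv i e d c l S (φ ::ₘ φ ::ₘ Γ, Δ) → Drv i e d c l S (φ ::ₘ Γ, Δ)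
  | ctrR {φ Γ Δ} : Drv i e d c l S (Γ, φ ::ₘ φ ::ₘ Δ) → Drv i e d c l S (Γ, φ ::ₘ Δ)
  -- introduction rules
  | andR {φ ψ Γ Δ} : i → Drv i e d c l S (Γ, φ ::ₘ Δ) → Drv i e d c l S (Γ, ψ ::ₘ Δ) →
      Drv i e d c l S (Γ, Fm.conj φ ψ ::ₘ Δ)
  | andL {φ ψ Γ Δ} : i → Drv i e d c l S (φ ::ₘ ψ ::ₘ Γ, Δ) →
      Drv i e d c l S (Fm.conj φ ψ ::ₘ Γ, Δ)
  | orL {φ ψ Γ Δ} : i → Drv i e d c l S (φ ::ₘ Γ, Δ) → Drv i e d c l S (ψ ::ₘ Γ, Δ) →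
      Drv i e d c l S (Fm.disj φ ψ ::ₘ Γ, Δ)
  | orR {φ ψ Γ Δ} : i → Drv i e d c l S (Γ, φ ::ₘ ψ ::ₘ Δ) →
      Drv i e d c l S (Γ, Fm.disj φ ψ ::ₘ Δ)
  | negR {φ Γ Δ} : i → Drv i e d c l S (φ ::ₘ Γ, Δ) → Drv i e d c l S (Γ, Fm.neg φ ::ₘ Δ)
  | negL {φ Γ Δ} : i → Drv i e d c l S (Γ, φ ::ₘ Δ) → Drv i e d c l S (Fm.neg φ ::ₘ Γ, Δ)
  | topR : i → Drv i e d c l S (0, {Fm.top})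
  | botL : i → Drv i e d c l S ({Fm.bot}, 0)
  -- elimination rules
  | andRE1 {φ ψ Γ Δ} : e → Drv i e d c l S (Γ, Fm.conj φ ψ ::ₘ Δ) → Drv i e d c l S (Γ, φ ::ₘ Δ)
  | andRE2 {φ ψ Γ Δ} : e → Drv i e d c l S (Γ, Fm.conj φ ψ ::ₘ Δ) → Drv i e d c l S (Γ, ψ ::ₘ Δ)
  | andLE {φ ψ Γ Δ} : e → Drv i e d c l S (Fm.conj φ ψ ::ₘ Γ, Δ) →
      Drv i e d c l S (φ ::ₘ ψ ::ₘ Γ, Δ)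
  | orLE1 {φ ψ Γ Δ} : e → Drv i e d c l S (Fm.disj φ ψ ::ₘ Γ, Δ) → Drv i e d c l S (φ ::ₘ Γ, Δ)
  | orLE2 {φ ψ Γ Δ} : e → Drv i e d c l S (Fm.disj φ ψ ::ₘ Γ, Δ) → Drv i e d c l S (ψ ::ₘ Γ, Δ)
  | orRE {φ ψ Γ Δ} : e → Drv i e d c l S (Γ, Fm.disj φ ψ ::ₘ Δ) →
      Drv i e d c l S (Γ, φ ::ₘ ψ ::ₘ Δ)
  | negRE {φ Γ Δ} : e → Drv i e d c l S (Γ, Fm.neg φ ::ₘ Δ) → Drv i e d c l S (φ ::ₘ Γ, Δ)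
  | negLE {φ Γ Δ} : e → Drv i e d c l S (Fm.neg φ ::ₘ Γ, Δ) → Drv i e d c l S (Γ, φ ::ₘ Δ)
  | topLE {Γ Δ} : e → Drv i e d c l S (Fm.top ::ₘ Γ, Δ) → Drv i e d c l S (Γ, Δ)
  | botRE {Γ Δ} : e → Drv i e d c l S (Γ, Fm.bot ::ₘ Δ) → Drv i e d c l S (Γ, Δ)
  -- Identity
  | ident (φ : Fm) : d → Drv i e d c l S ({φ}, {φ})
  -- Cut
  | cut {φ Γ Γ' Δ Δ'} : c → Drv i e d c l S (Γ, φ ::ₘ Δ) → Drv i e d c l S (φ ::ₘ Γ', Δ') →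
      Drv i e d c l S (Γ + Γ', Δ + Δ')
  -- Limited Cut
  | lcut1 {φ Γ Δ} : l → Drv i e d c l S (0, {φ}) → Drv i e d c l S (φ ::ₘ Γ, Δ) →
      Drv i e d c l S (Γ, Δ)
  | lcut2 {φ Γ Δ} : l → Drv i e d c l S (Γ, φ ::ₘ Δ) → Drv i e d c l S ({φ}, 0) →
      Drv i e d c l S (Γ, Δ)


namespace Stmt3Aux

abbrev D (S : Set Sqnt) := Drv True True True False True S

lemma wkLs {S} (A' : Multiset Fm) {A B} (h : D S (A, B)) : D S (A' + A, B) := by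
  induction A' using Multiset.induction with
  | empty => simpa using h
  | cons a s ih => rw [Multiset.cons_add]; exact Drv.wkL a ih

lemma wkRs {S} (B' : Multiset Fm) {A B} (h : D S (A, B)) : D S (A, B' + B) := by
  induction B' using Multiset.induction with
  | empty => simpa using h
  | cons a s ih => rw [Multiset.cons_add]; exact Drv.wkR a ih

def bigDisj : List Fm → Fm
  | [] => .bot
  | a :: l => .disj a (bigDisj l)

lemma disjR {S} (l : List Fm) {Sg Pi : Multiset Fm} (h : D S (Sg, ↑l + Pi)) :
    D S (Sg, bigDisj l ::ₘ Pi) := by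
  induction l generalizing Pi with
  | nil => exact Drv.wkR _ (by simpa using h)
  | cons a l ih =>
    apply Drv.orR trivial
    have h' : D S (Sg, ↑l + (a ::ₘ Pi)) := by
      have : (↑(a :: l) : Multiset Fm) + Pi = ↑l + (a ::ₘ Pi) := by
        simp only [← Multiset.cons_coe, ← Multiset.coe_add, ← Multiset.singleton_add, List.map_cons, List.map_nil, Multiset.coe_nil, add_zero, zero_add]; ac_rfl
      rwa [this] at h
    rw [Multiset.cons_swap]
    exact ih h'

lemma disjL {S} (l : List Fm) {Sg Pi : Multiset Fm}
    (h : ∀ a ∈ l, D S (a ::ₘ Sg, Pi)) : D S (bigDisj l ::ₘ Sg, Pi) := by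
  induction l with
  | nil =>
    have := wkRs (S := S) Pi (wkLs (A := ({Fm.bot} : Multiset Fm)) Sg (Drv.botL trivial))
    simpa [← Multiset.singleton_add, add_comm, bigDisj] using this
  | cons a l ih =>
    exact Drv.orL trivial (h a (by simp)) (ih fun b hb => h b (by simp [hb]))

lemma negMove {S} (l : List Fm) {Sg Pi : Multiset Fm} (h : D S (↑l + Sg, Pi)) :
    D S (Sg, ↑(l.map Fm.neg) + Pi) := by
  induction l generalizing Pi with
  | nil => simpa using h
  | cons a l ih =>
    have h1 : D S (↑l + Sg, Fm.neg a ::ₘ Pi) := by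
      apply Drv.negR trivial
      have : (↑(a :: l) : Multiset Fm) + Sg = a ::ₘ (↑l + Sg) := by
        simp only [← Multiset.cons_coe, ← Multiset.coe_add, ← Multiset.singleton_add, List.map_cons, List.map_nil, Multiset.coe_nil, add_zero, zero_add]; ac_rfl
      rwa [this] at h
    have := ih h1
    have e : (↑((a :: l).map Fm.neg) : Multiset Fm) + Pi
        = ↑(l.map Fm.neg) + (Fm.neg a ::ₘ Pi) := by
      simp only [← Multiset.cons_coe, ← Multiset.coe_add, ← Multiset.singleton_add, List.map_cons, List.map_nil, Multiset.coe_nil, add_zero, zero_add]; ac_rfl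
    rwa [e]

end Stmt3Aux

/-- In the calculus obtained from GB by adding Identity and Limited Cut, every
instance of Cut is derivable from its premises. -/


theorem stmt3 (Γ Γ' Δ Δ' : Multiset Fm) (φ : Fm) :
    Drv True True True False True {(Γ, φ ::ₘ Δ), (φ ::ₘ Γ', Δ')} (Γ + Γ', Δ + Δ') := by
  classical
  open Stmt3Aux in
  set S : Set Sqnt := {(Γ, φ ::ₘ Δ), (φ ::ₘ Γ', Δ')} with hS
  have p1 : D S (Γ, φ ::ₘ Δ) := Drv.prem (by simp [hS])
  have p2 : D S (φ ::ₘ Γ', Δ') := Drv.prem (by simp [hS])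
  set lΓ := Γ.toList with hlΓ
  set lΔ := Δ.toList with hlΔ
  have hΓ : (↑lΓ : Multiset Fm) = Γ := Multiset.coe_toList Γ
  have hΔ : (↑lΔ : Multiset Fm) = Δ := Multiset.coe_toList Δ
  set L : List Fm := φ :: (lΔ ++ lΓ.map Fm.neg) with hL
  -- Right: ∅ ▷ bigDisj L
  have r1 : D S (↑lΓ + 0, φ ::ₘ Δ) := by simpa [hΓ] using p1
  have r2 : D S (0, ↑(lΓ.map Fm.neg) + (φ ::ₘ Δ)) := negMove lΓ r1
  have r3 : D S (0, ↑L + 0) := by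
    have e : (↑L : Multiset Fm) + 0 = ↑(lΓ.map Fm.neg) + (φ ::ₘ Δ) := by
      rw [hL, ← hΔ]; simp only [← Multiset.cons_coe, ← Multiset.coe_add, ← Multiset.singleton_add, List.map_cons, List.map_nil, Multiset.coe_nil, add_zero, zero_add]; ac_rfl
    rwa [← e] at r2
  have r4 : D S (0, {bigDisj L}) := by simpa using disjR L r3
  -- Left: bigDisj L, Γ + Γ' ▷ Δ + Δ'
  have l4 : D S (bigDisj L ::ₘ (Γ + Γ'), Δ + Δ') := by
    apply disjL
    intro a ha
    rcases List.mem_cons.mp ha with rfl | ha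
    · -- a = φ : use second premise
      have := wkRs (S := S) Δ (wkLs (S := S) Γ p2)
      have e : Γ + (a ::ₘ Γ') = a ::ₘ (Γ + Γ') := by
        simp only [← Multiset.cons_coe, ← Multiset.coe_add, ← Multiset.singleton_add, List.map_cons, List.map_nil, Multiset.coe_nil, add_zero, zero_add]; ac_rfl
      rwa [e] at this
    rcases List.mem_append.mp ha with ha | ha
    · -- a ∈ Δ : identity
      have haΔ : a ∈ Δ := by rw [← hΔ]; exact_mod_cast ha
      have hid : D S ({a}, {a}) := Drv.ident a trivial
      have := wkRs (S := S) (Δ.erase a + Δ') (wkLs (S := S) (Γ + Γ') hid)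
      have e1 : Γ + Γ' + {a} = a ::ₘ (Γ + Γ') := by
        simp only [← Multiset.cons_coe, ← Multiset.coe_add, ← Multiset.singleton_add, List.map_cons, List.map_nil, Multiset.coe_nil, add_zero, zero_add]; ac_rfl
      have e2 : Δ.erase a + Δ' + {a} = Δ + Δ' := by
        conv_rhs => rw [← Multiset.cons_erase haΔ]
        simp only [← Multiset.cons_coe, ← Multiset.coe_add, ← Multiset.singleton_add, List.map_cons, List.map_nil, Multiset.coe_nil, add_zero, zero_add]; ac_rfl
      rwa [e1, e2] at this
    · -- a = neg γ, γ ∈ Γ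
      rcases List.mem_map.mp ha with ⟨γ, hγl, rfl⟩
      have hγΓ : γ ∈ Γ := by rw [← hΓ]; exact_mod_cast hγl
      have hid : D S ({γ}, γ ::ₘ 0) := by simpa using Drv.ident γ trivial
      have hneg : D S (Fm.neg γ ::ₘ {γ}, 0) := Drv.negL trivial hid
      have := wkRs (S := S) (Δ + Δ') (wkLs (S := S) (Γ.erase γ + Γ') hneg)
      have e1 : Γ.erase γ + Γ' + (Fm.neg γ ::ₘ {γ}) = Fm.neg γ ::ₘ (Γ + Γ') := by
        conv_rhs => rw [← Multiset.cons_erase hγΓ]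
        simp only [← Multiset.cons_coe, ← Multiset.coe_add, ← Multiset.singleton_add, List.map_cons, List.map_nil, Multiset.coe_nil, add_zero, zero_add]; ac_rfl
      have e2 : Δ + Δ' + 0 = Δ + Δ' := by simp
      rwa [e1, e2] at this
  exact Drv.lcut1 trivial r4 l4
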